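/- Let T be a proper infinite rooted tree and let ρ be a density on T. Then ρ ∈ Adm(Γ_∞) if and only if Σ_e ρ(e)η(e) ≥ 1 for every η ∈ Λ, where the sum is over all edges and is taken in [0,∞]. -/

import Mathlib

open scoped ENNReal NNReal

/-- A proper infinite rooted tree, modeled as a prefix-closed set of finite lists of
naturals in which every node has at least one and finitely many children. -/
structure PTree where
  mem : List ℕ → Prop
  root_mem : mem []
  prefix_closed : ∀ ⦃l₁ l₂ : List ℕ⦄, l₁ <+: l₂ → mem l₂ → mem l₁
  child_exists : ∀ ⦃l⦄, mem l → ∃ a, mem (l ++ [a])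
  finite_children : ∀ ⦃l⦄, mem l → {a : ℕ | mem (l ++ [a])}.Finite

/-- The initial segment of length `n` of `f : ℕ → ℕ`, as a list. -/
def seg (f : ℕ → ℕ) (n : ℕ) : List ℕ := (List.range n).map f

namespace PTree

variable (T : PTree)

/-- The edges of the tree: the nonempty lists in `T`. -/
def Edge : Type := {e : List ℕ // T.mem e ∧ e ≠ []}

/-- The family `Γ_∞` of infinite descending paths: functions all of whose
finite initial segments lie in `T`. -/
def GammaInf : Set (ℕ → ℕ) := {f | ∀ n, T.mem (seg f n)}

/-- `ρ`-length of the infinite descending path determined by `f`: the sum of `ρ`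
over the nonempty initial segments of `f`. -/
noncomputable def lenInf (ρ : List ℕ → ℝ≥0) (f : ℕ → ℕ) : ℝ≥0∞ :=
  ∑' n : ℕ, (ρ (seg f (n + 1)) : ℝ≥0∞)

/-- `ρ`-length of the finite descending path `γ_e` consisting of the nonempty
prefixes of the edge `e`. -/
noncomputable def lenFin (ρ : List ℕ → ℝ≥0) (e : List ℕ) : ℝ≥0∞ :=
  ∑ k ∈ Finset.range e.length, (ρ (e.take (k + 1)) : ℝ≥0∞)

/-- Admissible densities for the family `Γ_n` (identified with the shell `S_n`). -/
def AdmFin (n : ℕ) : Set (List ℕ → ℝ≥0) :=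
  {ρ | ∀ e : List ℕ, T.mem e → e.length = n → 1 ≤ lenFin ρ e}

/-- Admissible densities for the family `Γ_∞`. -/
def AdmInf : Set (List ℕ → ℝ≥0) :=
  {ρ | ∀ f ∈ T.GammaInf, 1 ≤ lenInf ρ f}

/-- The `p`-energy of a density `ρ` with respect to the weight `σ`. -/
noncomputable def energy (p : ℝ) (σ ρ : List ℕ → ℝ≥0) : ℝ≥0∞ :=
  ∑' e : T.Edge, (σ e.1 : ℝ≥0∞) * (ρ e.1 : ℝ≥0∞) ^ p

/-- The `∞`-energy of a density `ρ` with respect to the weight `σ`. -/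
noncomputable def energyTop (σ ρ : List ℕ → ℝ≥0) : ℝ≥0∞ :=
  ⨆ e : T.Edge, (σ e.1 : ℝ≥0∞) * (ρ e.1 : ℝ≥0∞)

/-- The `p`-modulus of the family `Γ_n`. -/
noncomputable def ModFin (p : ℝ) (σ : List ℕ → ℝ≥0) (n : ℕ) : ℝ≥0∞ :=
  ⨅ ρ ∈ T.AdmFin n, T.energy p σ ρ

/-- The `p`-modulus of the family `Γ_∞`. -/
noncomputable def ModInf (p : ℝ) (σ : List ℕ → ℝ≥0) : ℝ≥0∞ :=
  ⨅ ρ ∈ T.AdmInf, T.energy p σ ρ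

/-- The `∞`-modulus of the family `Γ_∞`. -/
noncomputable def ModTop (σ : List ℕ → ℝ≥0) : ℝ≥0∞ :=
  ⨅ ρ ∈ T.AdmInf, T.energyTop σ ρ

end PTree

namespace PTree

variable (T : PTree)

/-- The set `Λ` of unit flows from the root: nonnegative functions on edges whose
values on the first shell sum to `1` and whose value on each edge equals the sum
of the values on its children. -/
def Lambda : Set (List ℕ → ℝ≥0) :=
  {η | (∑' e : {l : List ℕ // T.mem l ∧ l.length = 1}, (η e.1 : ℝ≥0∞)) = 1 ∧
    ∀ e : List ℕ, T.mem e → e ≠ [] →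
      (∑' a : {a : ℕ // T.mem (e ++ [a])}, (η (e ++ [a.1]) : ℝ≥0∞)) = (η e : ℝ≥0∞)}

end PTree

section Stmt6Aux

open PTree

lemma seg_length (f : ℕ → ℕ) (n : ℕ) : (seg f n).length = n := by simp [seg]

lemma seg_succ (f : ℕ → ℕ) (n : ℕ) : seg f (n + 1) = seg f n ++ [f n] := by
  simp [seg, List.range_succ]

lemma seg_take (f : ℕ → ℕ) {n m : ℕ} (h : n ≤ m) : (seg f m).take n = seg f n := by
  simp only [seg, ← List.map_take, List.take_range, min_eq_left h]

lemma lenFin_concat (ρ : List ℕ → ℝ≥0) (e : List ℕ) (a : ℕ) :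
    PTree.lenFin ρ (e ++ [a]) = PTree.lenFin ρ e + (ρ (e ++ [a]) : ℝ≥0∞) := by
  unfold PTree.lenFin
  rw [List.length_append, List.length_singleton, Finset.sum_range_succ]
  congr 1
  · apply Finset.sum_congr rfl
    intro k hk
    rw [Finset.mem_range] at hk
    rw [List.take_append_of_le_length (by omega)]
  · rw [List.take_of_length_le (by simp)]

lemma lenFin_take_le (ρ : List ℕ → ℝ≥0) (e : List ℕ) (m : ℕ) :
    PTree.lenFin ρ (e.take m) ≤ PTree.lenFin ρ e := by
  unfold PTree.lenFin
  have hlen : (e.take m).length ≤ e.length := by simp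
  calc ∑ k ∈ Finset.range (e.take m).length, (ρ ((e.take m).take (k + 1)) : ℝ≥0∞)
      = ∑ k ∈ Finset.range (e.take m).length, (ρ (e.take (k + 1)) : ℝ≥0∞) := by
        apply Finset.sum_congr rfl
        intro k hk
        rw [Finset.mem_range] at hk
        rw [List.take_take, min_eq_left (by simp at hk ⊢; omega)]
    _ ≤ _ := Finset.sum_le_sum_of_subset (Finset.range_subset_range.mpr hlen)

lemma lenFin_prefix_le (ρ : List ℕ → ℝ≥0) {e e' : List ℕ} (h : e <+: e') :
    PTree.lenFin ρ e ≤ PTree.lenFin ρ e' := by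
  have : e = e'.take e.length := (List.prefix_iff_eq_take.mp h)
  rw [this]
  exact lenFin_take_le ρ e' e.length

lemma lenFin_seg (ρ : List ℕ → ℝ≥0) (f : ℕ → ℕ) (n : ℕ) :
    PTree.lenFin ρ (seg f n) = ∑ k ∈ Finset.range n, (ρ (seg f (k + 1)) : ℝ≥0∞) := by
  unfold PTree.lenFin
  rw [seg_length]
  apply Finset.sum_congr rfl
  intro k hk
  rw [Finset.mem_range] at hk
  rw [seg_take f (by omega)]

lemma lenInf_eq_iSup (ρ : List ℕ → ℝ≥0) (f : ℕ → ℕ) :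
    PTree.lenInf ρ f = ⨆ n, PTree.lenFin ρ (seg f n) := by
  unfold PTree.lenInf
  rw [ENNReal.tsum_eq_iSup_nat]
  exact iSup_congr fun n => (lenFin_seg ρ f n).symm

end Stmt6Aux
section Konig

open PTree

/-- A recursively chosen sequence of nodes. -/
private noncomputable def kseq (Q : List ℕ → Prop) (h0 : Q [])
    (step : ∀ e, Q e → ∃ a, Q (e ++ [a])) : ℕ → {l : List ℕ // Q l}
  | 0 => ⟨[], h0⟩
  | n + 1 =>
    let p := kseq Q h0 step n
    ⟨p.1 ++ [(step p.1 p.2).choose], (step p.1 p.2).choose_spec⟩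

private lemma kseq_succ (Q : List ℕ → Prop) (h0 : Q [])
    (step : ∀ e, Q e → ∃ a, Q (e ++ [a])) (n : ℕ) :
    ∃ a, (kseq Q h0 step (n + 1)).1 = (kseq Q h0 step n).1 ++ [a] :=
  ⟨_, rfl⟩

private lemma konig (T : PTree) (ρ : List ℕ → ℝ≥0) (c : ℝ≥0∞)
    (h0 : ∀ n, ∃ e', T.mem e' ∧ e'.length = n ∧ PTree.lenFin ρ e' < c) :
    ∃ f, f ∈ T.GammaInf ∧ ∀ n, PTree.lenFin ρ (seg f n) < c := by
  classical
  set Q : List ℕ → Prop := fun e =>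
    T.mem e ∧ ∀ n, ∃ e', T.mem e' ∧ e'.length = e.length + n ∧ e <+: e' ∧
      PTree.lenFin ρ e' < c with hQ
  have hQnil : Q [] := by
    refine ⟨T.root_mem, fun n => ?_⟩
    obtain ⟨e', h1, h2, h3⟩ := h0 n
    exact ⟨e', h1, by simpa using h2, List.nil_prefix, h3⟩
  have step : ∀ e, Q e → ∃ a, Q (e ++ [a]) := by
    rintro e ⟨hmem, hw⟩
    by_contra hno
    push_neg at hno
    have key : ∀ a, T.mem (e ++ [a]) → ∃ n, ¬ ∃ e', T.mem e' ∧
        e'.length = (e ++ [a]).length + n ∧ (e ++ [a]) <+: e' ∧ PTree.lenFin ρ e' < c := by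
      intro a ha
      by_contra hcon
      push_neg at hcon
      exact hno a ⟨ha, hcon⟩
    choose! N hN using key
    have hCfin : {a : ℕ | T.mem (e ++ [a])}.Finite := T.finite_children hmem
    obtain ⟨M, hM⟩ : ∃ M, ∀ a ∈ {a : ℕ | T.mem (e ++ [a])}, N a ≤ M := by
      obtain ⟨M, hM⟩ := (hCfin.image N).bddAbove
      exact ⟨M, fun a ha => hM (Set.mem_image_of_mem N ha)⟩
    obtain ⟨e', hm', hl', hp', hf'⟩ := hw (M + 1)
    obtain ⟨t, ht⟩ := hp'
    have htne : t ≠ [] := by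
      rintro rfl
      simp only [List.append_nil] at ht
      rw [← ht] at hl'
      omega
    set a := t.head htne with ha
    have hta : a :: t.tail = t := List.cons_head_tail htne
    have hchild : (e ++ [a]) <+: e' := by
      refine ⟨t.tail, ?_⟩
      rw [List.append_assoc, List.singleton_append, hta, ht]
    have hma : T.mem (e ++ [a]) := T.prefix_closed hchild hm'
    have hNa : N a ≤ M := hM a hma
    set k := e.length + 1 + N a with hk
    have hkle : k ≤ e'.length := by omega
    refine hN a hma ⟨e'.take k, T.prefix_closed (List.take_prefix k e') hm', ?_, ?_, ?_⟩
    · simp only [List.length_take]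
      simp only [List.length_append, List.length_singleton]
      omega
    · have h1 : e ++ [a] = (e'.take k).take (e.length + 1) := by
        rw [List.take_take, min_eq_left (by omega)]
        have := List.prefix_iff_eq_take.mp hchild
        simpa using this
      rw [h1]
      exact List.take_prefix _ _
    · exact lt_of_le_of_lt (lenFin_take_le ρ e' k) hf'
  -- build the branch
  let g := kseq Q hQnil step
  have glen : ∀ n, (g n).1.length = n := by
    intro n
    induction n with
    | zero => rfl
    | succ n ih =>
      obtain ⟨a, ha⟩ := kseq_succ Q hQnil step n
      show (g (n+1)).1.length = n + 1
      rw [ha]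
      simp
      exact ih
  have hseg : ∀ n, seg (fun n => ((g (n+1)).1).getLastD 0) n = (g n).1 := by
    intro n
    induction n with
    | zero => rfl
    | succ n ih =>
      obtain ⟨a, ha⟩ := kseq_succ Q hQnil step n
      rw [seg_succ, ih]
      show (g n).1 ++ [((g (n+1)).1).getLastD 0] = (g (n+1)).1
      rw [ha, List.getLastD_concat]
  refine ⟨fun n => ((g (n+1)).1).getLastD 0, fun n => ?_, fun n => ?_⟩
  · rw [hseg n]
    exact (g n).2.1
  · rw [hseg n]
    obtain ⟨e', hm', hl', hp', hf'⟩ := (g n).2.2 0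
    have : (g n).1 = e' := hp'.eq_of_length (by omega)
    rw [this]
    exact hf'

end Konig
section Flow

open PTree

private noncomputable def shellEquiv (T : PTree) (n : ℕ) :
    (Σ e : {l : List ℕ // T.mem l ∧ l.length = n}, {a : ℕ // T.mem (e.1 ++ [a])}) ≃
      {l : List ℕ // T.mem l ∧ l.length = n + 1} :=
  Equiv.ofBijective
    (fun p => ⟨p.1.1 ++ [p.2.1], p.2.2, by simp [p.1.2.2]⟩)
    (by
      constructor
      · rintro ⟨⟨e, he⟩, a, ha⟩ ⟨⟨e', he'⟩, a', ha'⟩ h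
        have hv : e ++ [a] = e' ++ [a'] := congrArg Subtype.val h
        have he2 : e = e' := by
          have := congrArg List.dropLast hv
          simpa using this
        subst he2
        have ha2 : a = a' := by
          have := congrArg List.getLast? hv
          simpa [List.getLast?_concat] using this
        subst ha2
        rfl
      · rintro ⟨l, hm, hl⟩
        have hne : l ≠ [] := by intro h; subst h; simp at hl
        refine ⟨⟨⟨l.dropLast, T.prefix_closed (List.dropLast_prefix l) hm, by
          simp [hl]⟩, ⟨l.getLast hne, by
          rwa [List.dropLast_append_getLast hne]⟩⟩, ?_⟩
        exact Subtype.ext (List.dropLast_append_getLast hne))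

private lemma tsum_shell_succ (T : PTree) (F : List ℕ → ℝ≥0∞) (n : ℕ) :
    ∑' l : {l : List ℕ // T.mem l ∧ l.length = n + 1}, F l.1
      = ∑' e : {l : List ℕ // T.mem l ∧ l.length = n},
          ∑' a : {a : ℕ // T.mem (e.1 ++ [a])}, F (e.1 ++ [a.1]) := by
  rw [← (shellEquiv T n).tsum_eq (fun l => F l.1), ENNReal.tsum_sigma']
  rfl

private lemma flow_mass (T : PTree) {η : List ℕ → ℝ≥0} (hη : η ∈ T.Lambda) (n : ℕ) :
    ∑' e : {l : List ℕ // T.mem l ∧ l.length = n + 1}, (η e.1 : ℝ≥0∞) = 1 := by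
  induction n with
  | zero => exact hη.1
  | succ n ih =>
    rw [tsum_shell_succ T (fun l => (η l : ℝ≥0∞)) (n + 1)]
    calc ∑' e : {l : List ℕ // T.mem l ∧ l.length = n + 1},
          ∑' a : {a : ℕ // T.mem (e.1 ++ [a])}, (η (e.1 ++ [a.1]) : ℝ≥0∞)
        = ∑' e : {l : List ℕ // T.mem l ∧ l.length = n + 1}, (η e.1 : ℝ≥0∞) := by
          refine tsum_congr fun e => ?_
          exact hη.2 e.1 e.2.1 (by intro h; have := e.2.2; rw [h] at this; simp at this)
      _ = 1 := ih

private lemma F_eq (T : PTree) (ρ : List ℕ → ℝ≥0) {η : List ℕ → ℝ≥0}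
    (hη : η ∈ T.Lambda) (n : ℕ) :
    ∑' e : {l : List ℕ // T.mem l ∧ l.length = n}, (η e.1 : ℝ≥0∞) * PTree.lenFin ρ e.1
      = ∑ k ∈ Finset.range n,
          ∑' e : {l : List ℕ // T.mem l ∧ l.length = k + 1},
            (ρ e.1 : ℝ≥0∞) * (η e.1 : ℝ≥0∞) := by
  induction n with
  | zero =>
    rw [Finset.range_zero, Finset.sum_empty]
    convert tsum_zero with e
    have : e.1 = [] := List.length_eq_zero_iff.mp e.2.2
    rw [this]
    simp [PTree.lenFin]
  | succ n ih =>
    rw [tsum_shell_succ T (fun l => (η l : ℝ≥0∞) * PTree.lenFin ρ l) n]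
    have hterm : ∀ (e : {l : List ℕ // T.mem l ∧ l.length = n}),
        ∑' a : {a : ℕ // T.mem (e.1 ++ [a])},
          (η (e.1 ++ [a.1]) : ℝ≥0∞) * PTree.lenFin ρ (e.1 ++ [a.1])
        = (η e.1 : ℝ≥0∞) * PTree.lenFin ρ e.1
          + ∑' a : {a : ℕ // T.mem (e.1 ++ [a])},
              (ρ (e.1 ++ [a.1]) : ℝ≥0∞) * (η (e.1 ++ [a.1]) : ℝ≥0∞) := by
      intro e
      have hlast : (∑' a : {a : ℕ // T.mem (e.1 ++ [a])}, (η (e.1 ++ [a.1]) : ℝ≥0∞))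
          * PTree.lenFin ρ e.1 = (η e.1 : ℝ≥0∞) * PTree.lenFin ρ e.1 := by
        by_cases hne : e.1 = []
        · rw [hne]
          simp [PTree.lenFin]
        · rw [hη.2 e.1 e.2.1 hne]
      calc ∑' a : {a : ℕ // T.mem (e.1 ++ [a])},
              (η (e.1 ++ [a.1]) : ℝ≥0∞) * PTree.lenFin ρ (e.1 ++ [a.1])
          = ∑' a : {a : ℕ // T.mem (e.1 ++ [a])},
              ((η (e.1 ++ [a.1]) : ℝ≥0∞) * PTree.lenFin ρ e.1
                + (ρ (e.1 ++ [a.1]) : ℝ≥0∞) * (η (e.1 ++ [a.1]) : ℝ≥0∞)) := by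
            refine tsum_congr fun a => ?_
            rw [lenFin_concat, mul_add, mul_comm ((ρ (e.1 ++ [a.1]) : ℝ≥0∞))]
        _ = (∑' a : {a : ℕ // T.mem (e.1 ++ [a])}, (η (e.1 ++ [a.1]) : ℝ≥0∞))
              * PTree.lenFin ρ e.1
            + ∑' a : {a : ℕ // T.mem (e.1 ++ [a])},
                (ρ (e.1 ++ [a.1]) : ℝ≥0∞) * (η (e.1 ++ [a.1]) : ℝ≥0∞) := by
            rw [ENNReal.tsum_add, ENNReal.tsum_mul_right]
        _ = _ := by rw [hlast]
    rw [tsum_congr hterm, ENNReal.tsum_add, ih, Finset.sum_range_succ]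
    congr 1
    rw [tsum_shell_succ T (fun l => (ρ l : ℝ≥0∞) * (η l : ℝ≥0∞)) n]

end Flow
section Edge

open PTree

private noncomputable def edgeEquiv (T : PTree) :
    (Σ k : ℕ, {l : List ℕ // T.mem l ∧ l.length = k + 1}) ≃ T.Edge :=
  Equiv.ofBijective
    (fun p => ⟨p.2.1, p.2.2.1, by
      have := p.2.2.2
      intro h
      rw [h] at this
      simp at this⟩)
    (by
      constructor
      · rintro ⟨k, l, hm, hl⟩ ⟨k', l', hm', hl'⟩ h
        have hv : l = l' := congrArg Subtype.val h
        subst hv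
        have : k = k' := by omega
        subst this
        rfl
      · rintro ⟨l, hm, hne⟩
        have : l.length ≠ 0 := by simpa using hne
        exact ⟨⟨l.length - 1, ⟨l, hm, by omega⟩⟩, rfl⟩)

private lemma tsum_edge (T : PTree) (G : List ℕ → ℝ≥0∞) :
    ∑' e : T.Edge, G e.1
      = ∑' k : ℕ, ∑' e : {l : List ℕ // T.mem l ∧ l.length = k + 1}, G e.1 := by
  rw [← (edgeEquiv T).tsum_eq (fun e => G e.1), ENNReal.tsum_sigma']
  rfl

end Edge
/-- `ρ ∈ Adm(Γ_∞)` iff `Σ_e ρ(e)η(e) ≥ 1` for every `η ∈ Λ`. -/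
theorem stmt6 (T : PTree) (ρ : List ℕ → ℝ≥0) :
    ρ ∈ T.AdmInf ↔
      ∀ η ∈ T.Lambda, 1 ≤ ∑' e : T.Edge, (ρ e.1 : ℝ≥0∞) * (η e.1 : ℝ≥0∞) := by
  constructor
  · intro hadm η hη
    by_contra hlt
    push_neg at hlt
    obtain ⟨c, hSc, hc1⟩ := exists_between hlt
    have hc0 : 0 < c := lt_of_le_of_lt zero_le hSc
    have hlev : ∀ n, ∃ e', T.mem e' ∧ e'.length = n ∧ PTree.lenFin ρ e' < c := by
      intro n
      match n with
      | 0 => exact ⟨[], T.root_mem, rfl, by simpa [PTree.lenFin] using hc0⟩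
      | n + 1 =>
        by_contra hcon
        push_neg at hcon
        have hm := flow_mass T hη n
        have h1 : c ≤ ∑' e : {l : List ℕ // T.mem l ∧ l.length = n + 1},
            (η e.1 : ℝ≥0∞) * PTree.lenFin ρ e.1 := by
          calc c = c * ∑' e : {l : List ℕ // T.mem l ∧ l.length = n + 1},
                (η e.1 : ℝ≥0∞) := by rw [hm, mul_one]
            _ = ∑' e : {l : List ℕ // T.mem l ∧ l.length = n + 1},
                c * (η e.1 : ℝ≥0∞) := ENNReal.tsum_mul_left.symm
            _ ≤ _ := ENNReal.tsum_le_tsum fun e => by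
                rw [mul_comm]
                exact mul_le_mul_right (hcon e.1 e.2.1 e.2.2) _
        have h2 := F_eq T ρ hη (n + 1)
        have h3 : (∑ k ∈ Finset.range (n + 1),
              ∑' e : {l : List ℕ // T.mem l ∧ l.length = k + 1},
                (ρ e.1 : ℝ≥0∞) * (η e.1 : ℝ≥0∞))
            ≤ ∑' e : T.Edge, (ρ e.1 : ℝ≥0∞) * (η e.1 : ℝ≥0∞) := by
          rw [tsum_edge T (fun l => (ρ l : ℝ≥0∞) * (η l : ℝ≥0∞))]
          exact ENNReal.sum_le_tsum _
        have hcS : c ≤ ∑' e : T.Edge, (ρ e.1 : ℝ≥0∞) * (η e.1 : ℝ≥0∞) :=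
          (h1.trans (le_of_eq h2)).trans h3
        exact absurd (hcS.trans_lt hSc) (lt_irrefl c)
    obtain ⟨f, hf, hflt⟩ := konig T ρ c hlev
    have h4 := hadm f hf
    rw [lenInf_eq_iSup] at h4
    have h5 : (⨆ n, PTree.lenFin ρ (seg f n)) ≤ c := iSup_le fun n => (hflt n).le
    exact absurd (h4.trans h5) (not_le.mpr hc1)
  · intro h f hf
    classical
    set η : List ℕ → ℝ≥0 := fun l => if l = seg f l.length then 1 else 0 with hηdef
    have hηval : ∀ l, (η l : ℝ≥0∞) = if l = seg f l.length then 1 else 0 := by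
      intro l
      simp only [hηdef]
      split <;> simp
    have hη : η ∈ T.Lambda := by
      constructor
      · refine tsum_eq_single ⟨seg f 1, hf 1, seg_length f 1⟩ ?_ |>.trans ?_
        · rintro ⟨l, hm, hl⟩ hne
          have hc : ¬ l = seg f l.length := by
            rw [hl]
            intro hcon
            exact hne (Subtype.ext hcon)
          exact (hηval _).trans (if_neg hc)
        · exact (hηval _).trans (if_pos (by show seg f 1 = seg f ((seg f 1).length); rw [seg_length]))
      · intro e hm hne
        by_cases hpath : e = seg f e.length
        · have hchild : T.mem (e ++ [f e.length]) := by
            have he : e ++ [f e.length] = seg f (e.length + 1) := by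
              rw [seg_succ, ← hpath]
            rw [he]
            exact hf _
          refine (tsum_eq_single (⟨f e.length, hchild⟩ : {a : ℕ // T.mem (e ++ [a])}) ?_).trans ?_
          · rintro ⟨a, ha⟩ hane
            have hc : ¬ (e ++ [a] = seg f ((e ++ [a]).length)) := by
              intro hcon
              rw [List.length_append, List.length_singleton, seg_succ, ← hpath] at hcon
              have ha2 : a = f e.length := by
                have := List.append_cancel_left hcon
                simpa using this
              exact hane (Subtype.ext ha2)
            exact (hηval _).trans (if_neg hc)
          · have h1 : (η (e ++ [f e.length]) : ℝ≥0∞) = 1 := by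
              refine (hηval _).trans (if_pos ?_)
              rw [List.length_append, List.length_singleton, seg_succ, ← hpath]
            have h2 : (η e : ℝ≥0∞) = 1 := (hηval _).trans (if_pos hpath)
            exact h1.trans h2.symm
        · have h0 : ∀ a : {a : ℕ // T.mem (e ++ [a])}, (η (e ++ [a.1]) : ℝ≥0∞) = 0 := by
            rintro ⟨a, ha⟩
            have hc : ¬ (e ++ [a] = seg f ((e ++ [a]).length)) := by
              intro hcon
              apply hpath
              rw [List.length_append, List.length_singleton, seg_succ] at hcon
              exact List.append_inj_left' hcon (by simp)
            exact (hηval _).trans (if_neg hc)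
          rw [tsum_congr h0, tsum_zero, hηval, if_neg hpath]
    have hkey := h η hη
    have hinj : Function.Injective (fun n : ℕ =>
        (⟨seg f (n + 1), hf (n + 1), by simp [seg, List.range_succ]⟩ : T.Edge)) := by
      intro n m hnm
      have h1 : seg f (n + 1) = seg f (m + 1) := congrArg Subtype.val hnm
      have h2 := congrArg List.length h1
      rw [seg_length, seg_length] at h2
      omega
    have hsupp : Function.support (fun e : T.Edge => (ρ e.1 : ℝ≥0∞) * (η e.1 : ℝ≥0∞))
        ⊆ Set.range (fun n : ℕ =>
          (⟨seg f (n + 1), hf (n + 1), by simp [seg, List.range_succ]⟩ : T.Edge)) := by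
      rintro ⟨l, hm, hne⟩ hsup
      have hηne : (η l : ℝ≥0∞) ≠ 0 := by
        intro h0
        apply hsup
        simp [h0]
      rw [hηval] at hηne
      have hl : l = seg f l.length := by
        by_contra hcon
        rw [if_neg hcon] at hηne
        exact hηne rfl
      have hln : l.length ≠ 0 := by simpa using hne
      refine ⟨l.length - 1, Subtype.ext ?_⟩
      have hfix : l.length - 1 + 1 = l.length := by omega
      show seg f (l.length - 1 + 1) = l
      rw [hfix]
      exact hl.symm
    have heq := Function.Injective.tsum_eq hinj hsupp
    unfold PTree.lenInf
    calc (1 : ℝ≥0∞) ≤ ∑' e : T.Edge, (ρ e.1 : ℝ≥0∞) * (η e.1 : ℝ≥0∞) := hkey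
      _ = ∑' n : ℕ, (ρ (seg f (n + 1)) : ℝ≥0∞) * (η (seg f (n + 1)) : ℝ≥0∞) := heq.symm
      _ = ∑' n : ℕ, (ρ (seg f (n + 1)) : ℝ≥0∞) := by
          refine tsum_congr fun n => ?_
          rw [hηval, if_pos (by rw [seg_length]), mul_one]
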